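/- If G is a connected α-critical König-Egerváry graph with a perfect matching, then G is isomorphic to K_2. -/

import Mathlib

open SimpleGraph

variable {V : Type*}

/-- A graph has a perfect matching. -/
def HasPM (G : SimpleGraph V) : Prop := ∃ M : G.Subgraph, M.IsPerfectMatching

/-- A set of vertices is independent (pairwise nonadjacent). -/
def IsIndep (G : SimpleGraph V) (s : Set V) : Prop := ∀ x ∈ s, ∀ y ∈ s, ¬ G.Adj x y

/-- The independence number. -/
noncomputable def alphaNum (G : SimpleGraph V) : ℕ :=
  sSup {n | ∃ s : Set V, IsIndep G s ∧ s.ncard = n}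

/-- The matching number. -/
noncomputable def matchNum (G : SimpleGraph V) : ℕ :=
  sSup {n | ∃ M : G.Subgraph, M.IsMatching ∧ M.edgeSet.ncard = n}

/-- A graph is König-Egerváry if α + ν = n. -/
def IsKE (G : SimpleGraph V) : Prop := alphaNum G + matchNum G = Nat.card V

/-- `G` is (the whole graph) an even subdivision of `K₄`: four corner vertices and six
internally disjoint odd paths joining each pair of corners, comprising all vertices
and edges of `G`. -/
def IsEvenSubdivK4 (G : SimpleGraph V) : Prop :=
  ∃ (c : Fin 4 → V) (P : ∀ i j : Fin 4, G.Walk (c i) (c j)),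
    Function.Injective c ∧
    (∀ i j : Fin 4, P j i = (P i j).reverse) ∧
    (∀ i j : Fin 4, i ≠ j → (P i j).IsPath ∧ Odd (P i j).length) ∧
    (∀ i j k l : Fin 4, i ≠ j → k ≠ l → ¬(i = k ∧ j = l) → ¬(i = l ∧ j = k) →
      ∀ x : V, x ∈ (P i j).support → x ∈ (P k l).support → x ∈ Set.range c) ∧
    (∀ x : V, ∃ i j : Fin 4, i ≠ j ∧ x ∈ (P i j).support) ∧
    (∀ e : Sym2 V, e ∈ G.edgeSet ↔ ∃ i j : Fin 4, i ≠ j ∧ e ∈ (P i j).edges)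

/-- `G` is (the whole graph) an even subdivision of `T`: two vertex-disjoint odd cycles
joined at blossom tips `v`, `w` by an odd path internally disjoint from the cycles,
comprising all vertices and edges of `G`. -/
def IsEvenSubdivT (G : SimpleGraph V) : Prop :=
  ∃ (v w : V) (C1 : G.Walk v v) (C2 : G.Walk w w) (P : G.Walk v w),
    C1.IsCycle ∧ C2.IsCycle ∧ Odd C1.length ∧ Odd C2.length ∧
    P.IsPath ∧ Odd P.length ∧
    (∀ x : V, x ∈ C1.support → x ∉ C2.support) ∧
    (∀ x : V, x ∈ P.support → x ∈ C1.support → x = v) ∧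
    (∀ x : V, x ∈ P.support → x ∈ C2.support → x = w) ∧
    (∀ x : V, x ∈ C1.support ∨ x ∈ C2.support ∨ x ∈ P.support) ∧
    (∀ e : Sym2 V, e ∈ G.edgeSet ↔ e ∈ C1.edges ∨ e ∈ C2.edges ∨ e ∈ P.edges)

/-- `G` contains a nice even subdivision of `T`: a subgraph `H` which is an even
subdivision of `T` and such that `G - V(H)` has a perfect matching. -/
def HasNiceEvenSubdivT (G : SimpleGraph V) : Prop :=
  ∃ H : G.Subgraph, IsEvenSubdivT H.coe ∧ HasPM (G.induce (H.vertsᶜ))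

/-- `G` has a spanning subgraph whose components are independent edges together with a
positive number of vertex-disjoint odd cycles. -/
def HasOddCycleCover (G : SimpleGraph V) : Prop :=
  ∃ (M : G.Subgraph) (k : ℕ) (u : Fin k → V) (C : ∀ i : Fin k, G.Walk (u i) (u i)),
    0 < k ∧ M.IsMatching ∧
    (∀ i, (C i).IsCycle ∧ Odd (C i).length) ∧
    (∀ i j, i ≠ j → ∀ x : V, x ∈ (C i).support → x ∉ (C j).support) ∧
    (∀ i, ∀ x ∈ (C i).support, x ∉ M.verts) ∧
    (∀ x : V, x ∈ M.verts ∨ ∃ i, x ∈ (C i).support)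

/-- A matchable graph is Egerváry iff it has no such spanning cover. -/
def IsEgervary (G : SimpleGraph V) : Prop := ¬ HasOddCycleCover G

/-- `G` contains two vertex-disjoint odd cycles. -/
def TwoDisjointOddCycles (G : SimpleGraph V) : Prop :=
  ∃ (a b : V) (C1 : G.Walk a a) (C2 : G.Walk b b),
    C1.IsCycle ∧ C2.IsCycle ∧ Odd C1.length ∧ Odd C2.length ∧
    ∀ x : V, x ∈ C1.support → x ∉ C2.support

/-- `G` is α-critical: deleting any edge increases the independence number. -/
def AlphaCritical (G : SimpleGraph V) : Prop :=
  ∀ e ∈ G.edgeSet, alphaNum (G.deleteEdges {e}) = alphaNum G + 1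

/-- The (open) neighborhood of a set of vertices. -/
def setN (G : SimpleGraph V) (I : Set V) : Set V := {x | x ∉ I ∧ ∃ y ∈ I, G.Adj x y}

lemma matching_card {V : Type*} [Fintype V] {G : SimpleGraph V} {N : G.Subgraph}
    (hN : N.IsMatching) : N.verts.ncard = 2 * N.edgeSet.ncard := by
  classical
  have hinj : Function.Injective (Sym2.map (Subtype.val : N.verts → V)) :=
    Sym2.map.injective Subtype.val_injective
  have h1 : N.edgeSet.ncard = N.coe.edgeSet.ncard := by
    rw [← N.image_coe_edgeSet_coe, Set.ncard_image_of_injective _ hinj]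
  have hdeg : ∀ v : N.verts, N.coe.degree v = 1 := by
    intro v
    have h3 : N.degree v = 1 := Subgraph.degree_eq_one_iff_existsUnique_adj.mpr (hN v.2)
    rw [← h3]
    convert N.coe_degree v
  have h2 : Fintype.card ↑N.verts = 2 * N.coe.edgeFinset.card := by
    have := N.coe.sum_degrees_eq_twice_card_edges
    rw [← this]
    simp only [Finset.card_univ.symm]
    rw [Finset.card_eq_sum_ones]
    apply Finset.sum_congr rfl
    intro v _
    symm
    convert hdeg v
  rw [h1, Set.ncard_eq_toFinset_card', Set.toFinset_card, h2]
  congr 1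
  rw [Set.ncard_eq_toFinset_card']
  simp [SimpleGraph.edgeFinset]

lemma indep_le_pm {V : Type*} [Fintype V] {G : SimpleGraph V} {M : G.Subgraph}
    (hM : M.IsPerfectMatching) (s : Set V) (hs : ∀ x ∈ s, ∀ y ∈ s, ¬ M.Adj x y) :
    s.ncard ≤ M.edgeSet.ncard := by
  classical
  set f : V → Sym2 V := fun v => s(v, (hM.1 (hM.2 v)).choose) with hf
  have hadj : ∀ v, M.Adj v ((hM.1 (hM.2 v)).choose) := fun v => (hM.1 (hM.2 v)).choose_spec.1
  apply Set.ncard_le_ncard_of_injOn f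
  · intro v _
    exact Subgraph.mem_edgeSet.mpr (hadj v)
  · intro x hx y hy hxy
    by_contra hne
    simp only [hf, Sym2.eq, Sym2.rel_iff', Prod.mk.injEq, Prod.swap_prod_mk] at hxy
    rcases hxy with ⟨h1, _⟩ | ⟨h1, h2⟩
    · exact hne h1
    · exact hs x hx y hy (h2 ▸ hadj x)

/-- A connected α-critical König-Egerváry graph with a perfect matching is `K₂`. -/
theorem alphaCritical_KE_matchable_eq_K2 {V : Type*} [Fintype V] (G : SimpleGraph V)
    (hconn : G.Connected) (hcrit : AlphaCritical G) (hKE : IsKE G) (hPM : HasPM G) :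
    Nonempty (G ≃g (⊤ : SimpleGraph (Fin 2))) := by
  classical
  obtain ⟨M, hM⟩ := hPM
  set m := M.edgeSet.ncard with hm
  have hn : Nat.card V = 2 * m := by
    rw [← Set.ncard_univ, ← hM.2.verts_eq_univ]
    exact matching_card hM.1
  have hub : ∀ k ∈ {n | ∃ N : G.Subgraph, N.IsMatching ∧ N.edgeSet.ncard = n}, k ≤ m := by
    rintro k ⟨N, hN, rfl⟩
    have h1 : N.verts.ncard ≤ Nat.card V := by
      rw [← Set.ncard_univ]
      exact Set.ncard_le_ncard (Set.subset_univ _) (Set.toFinite _)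
    rw [matching_card hN, hn] at h1
    omega
  have hmem : m ∈ {n | ∃ N : G.Subgraph, N.IsMatching ∧ N.edgeSet.ncard = n} := ⟨M, hM.1, rfl⟩
  have hnu : matchNum G = m :=
    le_antisymm (csSup_le ⟨m, hmem⟩ hub) (le_csSup ⟨m, hub⟩ hmem)
  have halpha : alphaNum G = m := by
    have h := hKE
    rw [IsKE, hnu, hn] at h
    omega
  have hedge : ∀ e ∈ G.edgeSet, e ∈ M.edgeSet := by
    intro e he
    by_contra hne
    have hle : alphaNum (G.deleteEdges {e}) ≤ m := by
      apply csSup_le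
      · exact ⟨0, ∅, fun x hx => absurd hx (Set.notMem_empty x), by simp⟩
      · rintro k ⟨s, hs, rfl⟩
        apply indep_le_pm hM
        intro x hx y hy hxy
        apply hs x hx y hy
        rw [deleteEdges_adj]
        refine ⟨M.adj_sub hxy, ?_⟩
        simp only [Set.mem_singleton_iff]
        intro heq
        exact hne (heq ▸ Subgraph.mem_edgeSet.mpr hxy)
    rw [hcrit e he, halpha] at hle
    omega
  obtain ⟨a⟩ := hconn.nonempty
  obtain ⟨b, hab, hb_uniq⟩ := hM.1 (hM.2 a)
  have hGab : G.Adj a b := M.adj_sub hab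
  have hne : a ≠ b := hGab.ne
  have hclosed : ∀ x y, G.Adj x y → (x = a ∨ x = b) → (y = a ∨ y = b) := by
    intro x y hxy hx
    have hMxy : M.Adj x y := Subgraph.mem_edgeSet.mp (hedge _ (G.mem_edgeSet.mpr hxy))
    rcases hx with rfl | rfl
    · exact Or.inr (hb_uniq y hMxy)
    · obtain ⟨c, hc, hc_uniq⟩ := hM.1 (hM.2 x)
      have h1 : y = c := hc_uniq y hMxy
      have h2 : a = c := hc_uniq a hab.symm
      exact Or.inl (h1.trans h2.symm)
  have hall : ∀ x : V, x = a ∨ x = b := by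
    have key : ∀ (u x : V) (p : G.Walk u x), (u = a ∨ u = b) → (x = a ∨ x = b) := by
      intro u x p
      induction p with
      | nil => exact id
      | cons h q ih => exact fun hu => ih (hclosed _ _ h hu)
    intro x
    obtain ⟨p⟩ := hconn.preconnected a x
    exact key a x p (Or.inl rfl)
  have hba : b ≠ a := hne.symm
  refine ⟨⟨⟨fun x => if x = a then 0 else 1, fun i => if i = 0 then a else b, ?_, ?_⟩, ?_⟩⟩
  · intro x
    rcases hall x with rfl | rfl
    · simp
    · simp [hba]
  · intro i
    fin_cases i
    · simp
    · simp [hba]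
  · intro x y
    simp only [top_adj, Equiv.coe_fn_mk]
    constructor
    · intro hxy
      have hxyne : x ≠ y := by
        intro h; subst h; exact hxy rfl
      rcases hall x with rfl | rfl <;> rcases hall y with rfl | rfl
      · exact absurd rfl hxyne
      · exact hGab
      · exact hGab.symm
      · exact absurd rfl hxyne
    · intro h
      have hxyne : x ≠ y := h.ne
      rcases hall x with rfl | rfl <;> rcases hall y with rfl | rfl
      · exact absurd rfl hxyne
      · simp [hba]
      · simp [hba]
      · exact absurd rfl hxyne
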